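/- arXiv:2110.10936 — 4 statements merged into one kernel-verified Lean document; each statement's English description precedes it below -/
import Mathlib

section
/- (Joint Distribution of the default times.) For all t_1, t_2, …, t_K ≥ 0, P(τ_1 > t_1, τ_2 > t_2, …, τ_K > t_K) = exp(−Σ_{i=1}^{K} A_i(t_i) − A_0(max(t_1, t_2, …, t_K))). -/
open MeasureTheory ProbabilityTheory

/-- The cumulative hazard `A(t) = ∫_0^t α(s) ds`. -/
noncomputable def cumHaz (α : ℝ → ℝ) (t : ℝ) : ℝ := ∫ s in (0:ℝ)..t, α s

/-- The first time `s ≥ 0` at which the cumulative hazard reaches level `z`,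
i.e. `inf {s ≥ 0 : A(s) ≥ z}`. -/
noncomputable def hitTime (α : ℝ → ℝ) (z : ℝ) : ℝ :=
  sInf {s : ℝ | 0 ≤ s ∧ z ≤ cumHaz α s}

section aux
variable {α : ℝ → ℝ}

lemma intInt (hcont : ContinuousOn α (Set.Ici 0)) {a b : ℝ} (ha : 0 ≤ a) (hb : 0 ≤ b) :
    IntervalIntegrable α MeasureTheory.volume a b := by
  apply ContinuousOn.intervalIntegrable
  apply hcont.mono
  intro x hx
  exact le_trans (le_min ha hb) hx.1

lemma cumHaz_mono (hcont : ContinuousOn α (Set.Ici 0))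
    (hpos : ∀ t, 0 ≤ t → 0 < α t) {a b : ℝ} (ha : 0 ≤ a) (hab : a ≤ b) :
    cumHaz α a ≤ cumHaz α b := by
  have hb : 0 ≤ b := ha.trans hab
  have h1 : cumHaz α a + ∫ s in a..b, α s = cumHaz α b :=
    intervalIntegral.integral_add_adjacent_intervals (intInt hcont le_rfl ha) (intInt hcont ha hb)
  have h2 : 0 ≤ ∫ s in a..b, α s :=
    intervalIntegral.integral_nonneg hab (fun x hx => (hpos x (ha.trans hx.1)).le)
  linarith

lemma cumHaz_nonneg (hcont : ContinuousOn α (Set.Ici 0))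
    (hpos : ∀ t, 0 ≤ t → 0 < α t) {a : ℝ} (ha : 0 ≤ a) : 0 ≤ cumHaz α a := by
  have h0 : cumHaz α 0 = 0 := intervalIntegral.integral_same
  linarith [cumHaz_mono hcont hpos le_rfl ha]

lemma cumHaz_contOn (hcont : ContinuousOn α (Set.Ici 0)) :
    ContinuousOn (cumHaz α) (Set.Ici 0) := by
  intro x hx
  have hx0 : (0:ℝ) ≤ x := hx
  have huIcc : Set.uIcc (0:ℝ) (x+1) = Set.Icc 0 (x+1) := Set.uIcc_of_le (by linarith)
  have hint : IntegrableOn α (Set.uIcc 0 (x+1)) MeasureTheory.volume := by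
    rw [huIcc]
    exact (hcont.mono (Set.Icc_subset_Ici_self)).integrableOn_Icc
  have h := intervalIntegral.continuousOn_primitive_interval hint
  have hxmem : x ∈ Set.uIcc (0:ℝ) (x+1) := by rw [huIcc]; exact ⟨hx0, by linarith⟩
  have h2 : ContinuousWithinAt (cumHaz α) (Set.uIcc 0 (x+1)) x := h x hxmem
  apply h2.mono_of_mem_nhdsWithin
  rw [huIcc, mem_nhdsWithin]
  exact ⟨Set.Iio (x+1), isOpen_Iio, lt_add_one x, fun y hy => ⟨hy.2, hy.1.le⟩⟩

lemma lt_hitTime_iff (hcont : ContinuousOn α (Set.Ici 0))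
    (hpos : ∀ t, 0 ≤ t → 0 < α t)
    (hinf : Filter.Tendsto (cumHaz α) Filter.atTop Filter.atTop)
    {s : ℝ} (hs : 0 ≤ s) (z : ℝ) :
    s < hitTime α z ↔ cumHaz α s < z := by
  set S := {u : ℝ | 0 ≤ u ∧ z ≤ cumHaz α u} with hS
  have hbdd : BddBelow S := ⟨0, fun u hu => hu.1⟩
  have hne : S.Nonempty := by
    obtain ⟨u, hu⟩ := ((hinf.eventually_ge_atTop z).and (Filter.eventually_ge_atTop 0)).exists
    exact ⟨u, hu.2, hu.1⟩
  have hclosed : IsClosed S := by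
    have : S = Set.Ici 0 ∩ (cumHaz α) ⁻¹' Set.Ici z := by
      ext u; simp [hS, Set.mem_setOf_eq, and_comm]
    rw [this]
    exact (cumHaz_contOn hcont).preimage_isClosed_of_isClosed isClosed_Ici isClosed_Ici
  constructor
  · intro h
    by_contra hle
    push_neg at hle
    exact absurd (csInf_le hbdd ⟨hs, hle⟩) (not_le.mpr h)
  · intro h
    have hmem : sInf S ∈ S := hclosed.csInf_mem hne hbdd
    by_contra hle
    push_neg at hle
    have := cumHaz_mono hcont hpos hmem.1 hle
    linarith [hmem.2]

end aux

/-- (Joint distribution of the default times.) With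
`η_i = inf {s ≥ 0 : A_i(s) ≥ Z_i}` and `τ_i = min (η_0, η_i)` for the banks `i = 1, …, K`,
for all `t_1, …, t_K ≥ 0`,
`P(τ_1 > t_1, …, τ_K > t_K) = exp (−∑_{i=1}^K A_i(t_i) − A_0(max (t_1, …, t_K)))`. -/
theorem joint_distribution_default_times
    {Ω : Type*} [MeasurableSpace Ω] (P : Measure Ω) [IsProbabilityMeasure P]
    (K : ℕ) (hK : 0 < K) (Z : Fin (K + 1) → Ω → ℝ) (α : Fin (K + 1) → ℝ → ℝ)
    (hZmeas : ∀ i, Measurable (Z i))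
    (hZindep : iIndepFun Z P)
    (hZexp : ∀ i, ∀ t : ℝ, 0 ≤ t → P {ω | t < Z i ω} = ENNReal.ofReal (Real.exp (-t)))
    (hαpos : ∀ i t, 0 ≤ t → 0 < α i t)
    (hαcont : ∀ i, ContinuousOn (α i) (Set.Ici 0))
    (hAinf : ∀ i, Filter.Tendsto (cumHaz (α i)) Filter.atTop Filter.atTop)
    (t : Fin K → ℝ) (ht : ∀ i, 0 ≤ t i) :
    P {ω | ∀ i : Fin K,
        t i < min (hitTime (α 0) (Z 0 ω)) (hitTime (α i.succ) (Z i.succ ω))}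
      = ENNReal.ofReal (Real.exp (-(∑ i : Fin K, cumHaz (α i.succ) (t i))
          - cumHaz (α 0)
              (Finset.univ.sup' (Finset.univ_nonempty_iff.mpr (Fin.pos_iff_nonempty.mp hK)) t))) := by
  have hne : (Finset.univ : Finset (Fin K)).Nonempty :=
    Finset.univ_nonempty_iff.mpr (Fin.pos_iff_nonempty.mp hK)
  set M : ℝ := Finset.univ.sup' hne t with hM
  have hM0 : 0 ≤ M := by
    obtain ⟨j, _, hj⟩ := Finset.exists_mem_eq_sup' hne t
    rw [hM, hj]; exact ht j
  have htM : ∀ i, t i ≤ M := fun i => Finset.le_sup' t (Finset.mem_univ i)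
  set c : Fin (K + 1) → ℝ := Fin.cons (cumHaz (α 0) M) (fun i => cumHaz (α i.succ) (t i)) with hc
  have hc0 : ∀ i, 0 ≤ c i := by
    intro i
    refine Fin.cases ?_ ?_ i
    · simpa [hc] using cumHaz_nonneg (hαcont 0) (hαpos 0) hM0
    · intro j
      simpa [hc] using cumHaz_nonneg (hαcont j.succ) (hαpos j.succ) (ht j)
  -- rewrite the event
  have hset : {ω | ∀ i : Fin K,
        t i < min (hitTime (α 0) (Z 0 ω)) (hitTime (α i.succ) (Z i.succ ω))}
      = ⋂ i, Z i ⁻¹' Set.Ioi (c i) := by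
    ext ω
    simp only [Set.mem_setOf_eq, Set.mem_iInter, Set.mem_preimage, Set.mem_Ioi, lt_min_iff]
    constructor
    · intro h
      rw [Fin.forall_fin_succ]
      constructor
      · obtain ⟨j, _, hj⟩ := Finset.exists_mem_eq_sup' hne t
        have := (lt_hitTime_iff (hαcont 0) (hαpos 0) (hAinf 0) (ht j) (Z 0 ω)).mp (h j).1
        simpa [hc, hM, hj] using this
      · intro j
        have := (lt_hitTime_iff (hαcont j.succ) (hαpos j.succ) (hAinf j.succ)
          (ht j) (Z j.succ ω)).mp (h j).2
        simpa [hc] using this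
    · intro h i
      rw [Fin.forall_fin_succ] at h
      constructor
      · rw [lt_hitTime_iff (hαcont 0) (hαpos 0) (hAinf 0) (ht i)]
        have h1 : cumHaz (α 0) (t i) ≤ cumHaz (α 0) M :=
          cumHaz_mono (hαcont 0) (hαpos 0) (ht i) (htM i)
        have h2 : cumHaz (α 0) M < Z 0 ω := by simpa [hc] using h.1
        linarith
      · rw [lt_hitTime_iff (hαcont i.succ) (hαpos i.succ) (hAinf i.succ) (ht i)]
        simpa [hc] using h.2 i
  rw [hset]
  rw [hZindep.meas_iInter (fun i => ⟨Set.Ioi (c i), measurableSet_Ioi, rfl⟩)]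
  have hPi : ∀ i, P (Z i ⁻¹' Set.Ioi (c i)) = ENNReal.ofReal (Real.exp (-(c i))) := by
    intro i
    have : Z i ⁻¹' Set.Ioi (c i) = {ω | c i < Z i ω} := rfl
    rw [this, hZexp i (c i) (hc0 i)]
  simp_rw [hPi]
  rw [← ENNReal.ofReal_prod_of_nonneg (fun i _ => (Real.exp_pos _).le)]
  rw [← Real.exp_sum]
  congr 1
  have h1 : ∑ x : Fin (K+1), -(c x) = -(∑ x, c x) := by
    rw [Finset.sum_neg_distrib]
  rw [h1, Fin.sum_univ_succ]
  simp only [hc, Fin.cons_zero, Fin.cons_succ]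
  ring_nf
end

section
/- (Catastrophic market failure under destructive competition.) Suppose that for each K ≥ 1 the idiosyncratic intensity of every bank i = 1, …, K is α_i(t, K) = ln(K) + b(t), so that A_i(t, K) = t ln(K) + B(t) with B(t) = ∫_0^t b(s) ds. Then for every ε ∈ (0, 1), with τ_(K) = max(τ_1, …, τ_K) defined from the K-bank model, lim_{K → ∞} P(τ_(K) ≤ ε) = 1 − e^{−A_0(ε)} = P(η_0 ≤ ε). -/
open MeasureTheory ProbabilityTheory

lemma cumHaz_props {g : ℝ → ℝ} (hgc : ContinuousOn g (Set.Ici 0))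
    (hg0 : ∀ t, 0 ≤ t → 0 ≤ g t) :
    ContinuousOn (cumHaz g) (Set.Ici 0) ∧ MonotoneOn (cumHaz g) (Set.Ici 0) ∧
      ∀ t, 0 ≤ t → 0 ≤ cumHaz g t := by
  set g' : ℝ → ℝ := fun s => g (max s 0) with hg'
  have hcont : Continuous g' :=
    hgc.comp_continuous (continuous_id.max continuous_const) (fun x => Set.mem_Ici.mpr (le_max_right _ _))
  have hint : ∀ a b : ℝ, IntervalIntegrable g' MeasureTheory.volume a b :=
    fun a b => hcont.intervalIntegrable a b
  have heq : ∀ t, 0 ≤ t → cumHaz g t = cumHaz g' t := by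
    intro t ht
    apply intervalIntegral.integral_congr
    intro s hs
    rw [Set.uIcc_of_le ht] at hs
    simp [g', max_eq_left hs.1]
  have hmono' : Monotone (cumHaz g') := by
    intro x y hxy
    have := intervalIntegral.integral_add_adjacent_intervals (hint 0 x) (hint x y)
    have hnn : 0 ≤ ∫ s in x..y, g' s :=
      intervalIntegral.integral_nonneg hxy (fun u _ => hg0 _ (le_max_right _ _))
    unfold cumHaz
    linarith [this]
  have hcont' : Continuous (cumHaz g') := intervalIntegral.continuous_primitive hint 0
  refine ⟨?_, ?_, ?_⟩
  · exact (hcont'.continuousOn).congr heq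
  · intro x hx y hy hxy
    rw [heq x hx, heq y hy]; exact hmono' hxy
  · intro t ht
    have h0 : cumHaz g' 0 = 0 := by simp [cumHaz]
    rw [heq t ht]
    calc (0:ℝ) = cumHaz g' 0 := h0.symm
      _ ≤ cumHaz g' t := hmono' ht

lemma sInf_hit_le_iff {f : ℝ → ℝ} (hmono : MonotoneOn f (Set.Ici 0))
    (hcont : ContinuousOn f (Set.Ici 0)) (htop : Filter.Tendsto f Filter.atTop Filter.atTop)
    {z ε : ℝ} (hε : 0 ≤ ε) :
    sInf {s : ℝ | 0 ≤ s ∧ z ≤ f s} ≤ ε ↔ z ≤ f ε := by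
  have hSeq : {s : ℝ | 0 ≤ s ∧ z ≤ f s} = Set.Ici 0 ∩ f ⁻¹' Set.Ici z := by
    ext s; simp [Set.mem_Ici, and_comm]
  have hbdd : BddBelow {s : ℝ | 0 ≤ s ∧ z ≤ f s} := ⟨0, fun x hx => hx.1⟩
  have hne : {s : ℝ | 0 ≤ s ∧ z ≤ f s}.Nonempty := by
    obtain ⟨s, hs1, hs2⟩ :=
      ((htop.eventually_ge_atTop z).and (Filter.eventually_ge_atTop 0)).exists
    exact ⟨s, hs2, hs1⟩
  have hclosed : IsClosed {s : ℝ | 0 ≤ s ∧ z ≤ f s} := by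
    rw [hSeq]
    exact hcont.preimage_isClosed_of_isClosed isClosed_Ici isClosed_Ici
  constructor
  · intro h
    have hmem := hclosed.csInf_mem hne hbdd
    exact hmem.2.trans (hmono hmem.1 hε h)
  · intro h
    exact csInf_le hbdd ⟨hε, h⟩

lemma exp_cdf {Ω : Type*} [MeasurableSpace Ω] (P : Measure Ω) [IsProbabilityMeasure P]
    {Z : Ω → ℝ} (hm : Measurable Z)
    (hexp : ∀ t : ℝ, 0 ≤ t → P {ω | t < Z ω} = ENNReal.ofReal (Real.exp (-t)))
    {c : ℝ} (hc : 0 ≤ c) : P {ω | Z ω ≤ c} = ENNReal.ofReal (1 - Real.exp (-c)) := by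
  have h1 : {ω | Z ω ≤ c} = {ω | c < Z ω}ᶜ := by ext ω; simp
  have h2 : MeasurableSet {ω | c < Z ω} := hm measurableSet_Ioi
  rw [h1, prob_compl_eq_one_sub h2, hexp c hc, ← ENNReal.ofReal_one,
    ← ENNReal.ofReal_sub _ (Real.exp_nonneg _)]

/-- (Catastrophic market failure under destructive competition.)
In the `K`-bank model, every bank `i = 1, …, K` has idiosyncratic cumulative hazard
`A_i(s, K) = s · ln K + B(s)` with `B(s) = ∫_0^s b(u) du`, so
`η_i^{(K)} = inf {s ≥ 0 : s ln K + B(s) ≥ Z_i}` and `τ_i^{(K)} = min (η_0, η_i^{(K)})`.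
Then for every `ε ∈ (0, 1)`, with `τ_(K) = max (τ_1^{(K)}, …, τ_K^{(K)})`,
`lim_{K → ∞} P(τ_(K) ≤ ε) = 1 − e^{−A_0(ε)} = P(η_0 ≤ ε)`. -/
theorem catastrophic_market_failure_destructive_competition
    {Ω : Type*} [MeasurableSpace Ω] (P : Measure Ω) [IsProbabilityMeasure P]
    (Z : ℕ → Ω → ℝ) (α₀ b : ℝ → ℝ)
    (hZmeas : ∀ i, Measurable (Z i))
    (hZindep : iIndepFun Z P)
    (hZexp : ∀ i, ∀ t : ℝ, 0 ≤ t → P {ω | t < Z i ω} = ENNReal.ofReal (Real.exp (-t)))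
    (hα₀pos : ∀ t, 0 ≤ t → 0 < α₀ t) (hbnonneg : ∀ t, 0 ≤ t → 0 ≤ b t)
    (hα₀cont : ContinuousOn α₀ (Set.Ici 0)) (hbcont : ContinuousOn b (Set.Ici 0))
    (hA₀inf : Filter.Tendsto (cumHaz α₀) Filter.atTop Filter.atTop)
    (ε : ℝ) (hε : 0 < ε) (hε1 : ε < 1) :
    Filter.Tendsto
      (fun K : ℕ => P {ω | ∀ i : ℕ, 1 ≤ i → i ≤ K →
          min (hitTime α₀ (Z 0 ω))
            (sInf {s : ℝ | 0 ≤ s ∧ Z i ω ≤ s * Real.log K + cumHaz b s}) ≤ ε})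
      Filter.atTop (nhds (ENNReal.ofReal (1 - Real.exp (-cumHaz α₀ ε))))
    ∧ ENNReal.ofReal (1 - Real.exp (-cumHaz α₀ ε)) = P {ω | hitTime α₀ (Z 0 ω) ≤ ε} := by
  obtain ⟨hA₀cont, hA₀mono, hA₀nn⟩ := cumHaz_props hα₀cont (fun t ht => (hα₀pos t ht).le)
  obtain ⟨hBcont, hBmono, hBnn⟩ := cumHaz_props hbcont hbnonneg
  set a := cumHaz α₀ ε with ha
  have ha0 : 0 ≤ a := hA₀nn ε hε.le
  have hhit0 : ∀ z : ℝ, hitTime α₀ z ≤ ε ↔ z ≤ a :=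
    fun z => sInf_hit_le_iff hA₀mono hA₀cont hA₀inf hε.le
  have hsecond : ENNReal.ofReal (1 - Real.exp (-a)) = P {ω | hitTime α₀ (Z 0 ω) ≤ ε} := by
    have hset : {ω | hitTime α₀ (Z 0 ω) ≤ ε} = {ω | Z 0 ω ≤ a} := by
      ext ω; exact hhit0 _
    rw [hset, exp_cdf P (hZmeas 0) (hZexp 0) ha0]
  refine ⟨?_, hsecond⟩
  set c : ℕ → ℝ := fun K => ε * Real.log K + cumHaz b ε with hc
  have hBε : 0 ≤ cumHaz b ε := hBnn ε hε.le
  have hcnn : ∀ K : ℕ, 1 ≤ K → 0 ≤ c K := by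
    intro K hK
    have : (1:ℝ) ≤ K := by exact_mod_cast hK
    exact add_nonneg (mul_nonneg hε.le (Real.log_nonneg this)) hBε
  -- Event rewriting
  have hEvent : ∀ K : ℕ, 2 ≤ K →
      {ω | ∀ i : ℕ, 1 ≤ i → i ≤ K → min (hitTime α₀ (Z 0 ω))
          (sInf {s : ℝ | 0 ≤ s ∧ Z i ω ≤ s * Real.log K + cumHaz b s}) ≤ ε}
        = (Z 0 ⁻¹' Set.Iic a) ∪ ⋂ i ∈ Finset.Icc 1 K, Z i ⁻¹' Set.Iic (c K) := by
    intro K hK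
    have hlogpos : 0 < Real.log K := Real.log_pos (by exact_mod_cast hK)
    set f : ℝ → ℝ := fun s => s * Real.log K + cumHaz b s with hf
    have hfmono : MonotoneOn f (Set.Ici 0) := fun x hx y hy hxy =>
      add_le_add (mul_le_mul_of_nonneg_right hxy hlogpos.le) (hBmono hx hy hxy)
    have hfcont : ContinuousOn f (Set.Ici 0) :=
      ((continuous_id.mul continuous_const).continuousOn).add hBcont
    have hftop : Filter.Tendsto f Filter.atTop Filter.atTop := by
      have h1 : Filter.Tendsto (fun s : ℝ => s * Real.log K) Filter.atTop Filter.atTop :=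
        Filter.Tendsto.atTop_mul_const hlogpos Filter.tendsto_id
      refine Filter.tendsto_atTop_mono' _ ?_ h1
      filter_upwards [Filter.eventually_ge_atTop (0:ℝ)] with s hs
      exact le_add_of_nonneg_right (hBnn s hs)
    have hiff : ∀ (ω : Ω) (i : ℕ),
        (min (hitTime α₀ (Z 0 ω))
          (sInf {s : ℝ | 0 ≤ s ∧ Z i ω ≤ s * Real.log K + cumHaz b s}) ≤ ε)
          ↔ (Z 0 ω ≤ a ∨ Z i ω ≤ c K) := by
      intro ω i
      rw [min_le_iff, hhit0]
      constructor
      · rintro (h | h)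
        · exact Or.inl h
        · exact Or.inr ((sInf_hit_le_iff hfmono hfcont hftop hε.le).mp h)
      · rintro (h | h)
        · exact Or.inl h
        · exact Or.inr ((sInf_hit_le_iff hfmono hfcont hftop hε.le).mpr h)
    ext ω
    simp only [Set.mem_setOf_eq, Set.mem_union, Set.mem_iInter, Set.mem_preimage,
      Set.mem_Iic, Finset.mem_Icc]
    constructor
    · intro h
      by_cases hA : Z 0 ω ≤ a
      · exact Or.inl hA
      · refine Or.inr (fun i hi => ?_)
        rcases (hiff ω i).mp (h i hi.1 hi.2) with h' | h'
        exacts [absurd h' hA, h']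
    · rintro (h | h) i h1 h2
      · exact (hiff ω i).mpr (Or.inl h)
      · exact (hiff ω i).mpr (Or.inr (h i ⟨h1, h2⟩))
  -- Probability computation
  have hProb : ∀ K : ℕ, 2 ≤ K →
      P ((Z 0 ⁻¹' Set.Iic a) ∪ ⋂ i ∈ Finset.Icc 1 K, Z i ⁻¹' Set.Iic (c K))
        = ENNReal.ofReal
            ((1 - Real.exp (-a)) + Real.exp (-a) * (1 - Real.exp (-(c K)))^K) := by
    intro K hK
    have hcK : 0 ≤ c K := hcnn K (by omega)
    have hexp1 : Real.exp (-(c K)) ≤ 1 := Real.exp_le_one_iff.mpr (by linarith)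
    have hexpa1 : Real.exp (-a) ≤ 1 := Real.exp_le_one_iff.mpr (by linarith)
    set A := Z 0 ⁻¹' Set.Iic a with hA
    set C := ⋂ i ∈ Finset.Icc 1 K, Z i ⁻¹' Set.Iic (c K) with hC
    have hAm : MeasurableSet A := (hZmeas 0) measurableSet_Iic
    have hCm : MeasurableSet C :=
      MeasurableSet.biInter (Finset.Icc 1 K).countable_toSet
        (fun i _ => (hZmeas i) measurableSet_Iic)
    have hsplit : A ∪ C = A ∪ (Aᶜ ∩ C) := by
      ext ω; by_cases h : ω ∈ A <;> simp [h]
    have hdisj : Disjoint A (Aᶜ ∩ C) :=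
      (disjoint_compl_right).mono_right Set.inter_subset_left
    rw [hsplit, measure_union hdisj (hAm.compl.inter hCm)]
    have hPA : P A = ENNReal.ofReal (1 - Real.exp (-a)) := by
      have : A = {ω | Z 0 ω ≤ a} := rfl
      rw [this, exp_cdf P (hZmeas 0) (hZexp 0) ha0]
    set sets : ℕ → Set ℝ := fun i => if i = 0 then Set.Ioi a else Set.Iic (c K) with hsets
    have hIccinsert : Finset.Icc 0 K = insert 0 (Finset.Icc 1 K) := by
      ext i; simp only [Finset.mem_Icc, Finset.mem_insert]; omega
    have hACeq : Aᶜ ∩ C = ⋂ i ∈ Finset.Icc 0 K, Z i ⁻¹' sets i := by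
      rw [hIccinsert, Finset.set_biInter_insert]
      congr 1
      · simp only [hsets, if_pos rfl, hA, ← Set.preimage_compl, Set.compl_Iic]
      · refine Set.iInter_congr fun i => Set.iInter_congr fun hi => ?_
        have hne : i ≠ 0 := by
          have := (Finset.mem_Icc.mp hi).1; omega
        simp [hsets, hne]
    have hind := hZindep.measure_inter_preimage_eq_mul (Finset.Icc 0 K) (sets := sets)
      (fun i _ => by
        by_cases h : i = 0 <;> simp [hsets, h, measurableSet_Ioi, measurableSet_Iic])
    rw [hACeq, hind, hIccinsert, Finset.prod_insert (by simp)]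
    have h0 : P (Z 0 ⁻¹' sets 0) = ENNReal.ofReal (Real.exp (-a)) := by
      have hs0 : Z 0 ⁻¹' sets 0 = {ω | a < Z 0 ω} := by
        simp only [hsets, if_pos rfl]; rfl
      rw [hs0, hZexp 0 a ha0]
    have hiP : ∀ i ∈ Finset.Icc 1 K,
        P (Z i ⁻¹' sets i) = ENNReal.ofReal (1 - Real.exp (-(c K))) := by
      intro i hi
      have hne : i ≠ 0 := by
        have := (Finset.mem_Icc.mp hi).1; omega
      have hsi : Z i ⁻¹' sets i = {ω | Z i ω ≤ c K} := by
        simp only [hsets, if_neg hne]; rfl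
      rw [hsi, exp_cdf P (hZmeas i) (hZexp i) hcK]
    rw [Finset.prod_congr rfl hiP, Finset.prod_const, Nat.card_Icc]
    have hKcard : K + 1 - 1 = K := by omega
    rw [hKcard, hPA, h0,
      ← ENNReal.ofReal_pow (by linarith),
      ← ENNReal.ofReal_mul (Real.exp_nonneg _),
      ← ENNReal.ofReal_add (by linarith)
        (mul_nonneg (Real.exp_nonneg _) (pow_nonneg (by linarith) K))]
  -- The limit
  have hpow : Filter.Tendsto (fun K : ℕ => (1 - Real.exp (-(c K)))^K)
      Filter.atTop (nhds 0) := by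
    have hu : Filter.Tendsto (fun K : ℕ => (K:ℝ) * Real.exp (-(c K)))
        Filter.atTop Filter.atTop := by
      have hueq : ∀ᶠ K : ℕ in Filter.atTop, Real.exp ((1-ε) * Real.log K - cumHaz b ε)
          = (K:ℝ) * Real.exp (-(c K)) := by
        filter_upwards [Filter.eventually_ge_atTop 1] with K hK
        have hKpos : (0:ℝ) < K := by exact_mod_cast hK
        have hKexp : (K:ℝ) = Real.exp (Real.log K) := (Real.exp_log hKpos).symm
        conv_rhs => rw [hKexp]
        rw [← Real.exp_add]
        congr 1
        simp only [hc]
        ring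
      refine Filter.Tendsto.congr' hueq ?_
      apply Real.tendsto_exp_atTop.comp
      have hlog : Filter.Tendsto (fun K : ℕ => Real.log K) Filter.atTop Filter.atTop :=
        Real.tendsto_log_atTop.comp tendsto_natCast_atTop_atTop
      have h1 : Filter.Tendsto (fun K : ℕ => (1-ε) * Real.log K) Filter.atTop Filter.atTop :=
        hlog.const_mul_atTop (by linarith)
      simpa [sub_eq_add_neg] using Filter.tendsto_atTop_add_const_right Filter.atTop
        (-cumHaz b ε) h1
    have hupper : Filter.Tendsto (fun K : ℕ => Real.exp (-((K:ℝ) * Real.exp (-(c K)))))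
        Filter.atTop (nhds 0) :=
      Real.tendsto_exp_atBot.comp (Filter.tendsto_neg_atTop_atBot.comp hu)
    apply squeeze_zero' ?_ ?_ hupper
    · filter_upwards [Filter.eventually_ge_atTop 1] with K hK
      have h1 : Real.exp (-(c K)) ≤ 1 := Real.exp_le_one_iff.mpr (by linarith [hcnn K hK])
      exact pow_nonneg (by linarith) K
    · filter_upwards [Filter.eventually_ge_atTop 1] with K hK
      have h1 : Real.exp (-(c K)) ≤ 1 := Real.exp_le_one_iff.mpr (by linarith [hcnn K hK])
      have h2 : 1 - Real.exp (-(c K)) ≤ Real.exp (-(Real.exp (-(c K)))) := by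
        have := Real.add_one_le_exp (-(Real.exp (-(c K))))
        linarith
      calc (1 - Real.exp (-(c K)))^K ≤ (Real.exp (-(Real.exp (-(c K)))))^K :=
            pow_le_pow_left₀ (by linarith) h2 K
        _ = Real.exp (-((K:ℝ) * Real.exp (-(c K)))) := by
            rw [← Real.exp_nat_mul]; congr 1; ring
  have hr : Filter.Tendsto
      (fun K : ℕ => (1 - Real.exp (-a)) + Real.exp (-a) * (1 - Real.exp (-(c K)))^K)
      Filter.atTop (nhds (1 - Real.exp (-a))) := by
    have h := Filter.Tendsto.const_add (1 - Real.exp (-a))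
      (Filter.Tendsto.const_mul (Real.exp (-a)) hpow)
    simpa using h
  have hofReal := ENNReal.tendsto_ofReal (α := ℕ) hr
  refine Filter.Tendsto.congr' ?_ hofReal
  filter_upwards [Filter.eventually_ge_atTop 2] with K hK
  rw [hEvent K hK, hProb K hK]
end

section
/- (Permutation lower bound on the market failure probability.) For every ε > 0, P(|τ_i − τ_j| < ε for some pair (i,j) with 1 ≤ i, j ≤ K, i ≠ j) ≥ 1 − e^{−A_0((K−1)ε)} Σ_{σ ∈ S_K} exp( − Σ_{i=1}^{K−1} A_{σ(i+1)}(i ε) ), where the sum runs over all K! permutations σ of {1, …, K}. -/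
open MeasureTheory ProbabilityTheory
open Filter

lemma cumHaz_nonneg_s14 {α : ℝ → ℝ} (hpos : ∀ t, 0 ≤ t → 0 < α t) {t : ℝ} (ht : 0 ≤ t) :
    0 ≤ cumHaz α t :=
  intervalIntegral.integral_nonneg ht (fun u hu => (hpos u hu.1).le)

lemma hitTime_nonneg (α : ℝ → ℝ) (z : ℝ) : 0 ≤ hitTime α z :=
  Real.sInf_nonneg (fun _ hx => hx.1)

lemma cumHaz_le_of_le_hitTime {α : ℝ → ℝ} (hcont : ContinuousOn α (Set.Ici 0))
    {z t : ℝ} (ht : 0 < t) (h : t ≤ hitTime α z) : cumHaz α t ≤ z := by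
  have hbdd : BddBelow {s : ℝ | 0 ≤ s ∧ z ≤ cumHaz α s} := ⟨0, fun x hx => hx.1⟩
  have hlt : ∀ u ∈ Set.Ico (0:ℝ) t, cumHaz α u ≤ z := by
    intro u hu
    by_contra hcon
    push_neg at hcon
    have : hitTime α z ≤ u := csInf_le hbdd ⟨hu.1, hcon.le⟩
    linarith [hu.2]
  have hint : MeasureTheory.IntegrableOn α (Set.uIcc 0 t) := by
    rw [Set.uIcc_of_le ht.le]
    exact (hcont.mono (Set.Icc_subset_Ici_self)).integrableOn_Icc
  have hconti : ContinuousOn (cumHaz α) (Set.uIcc 0 t) :=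
    intervalIntegral.continuousOn_primitive_interval hint
  have hcwa : ContinuousWithinAt (cumHaz α) (Set.Ico 0 t) t :=
    (hconti t Set.right_mem_uIcc).mono
      (by rw [Set.uIcc_of_le ht.le]; exact Set.Ico_subset_Icc_self)
  have hne : (nhdsWithin t (Set.Ico 0 t)).NeBot := by
    rw [← mem_closure_iff_nhdsWithin_neBot, closure_Ico ht.ne]
    exact Set.right_mem_Icc.mpr ht.le
  exact le_of_tendsto hcwa (eventually_mem_nhdsWithin.mono hlt)

lemma tail_bound {Ω : Type*} [MeasurableSpace Ω] (P : Measure Ω) [IsProbabilityMeasure P]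
    (W : Ω → ℝ) (hexp : ∀ t : ℝ, 0 ≤ t → P {ω | t < W ω} = ENNReal.ofReal (Real.exp (-t)))
    {a : ℝ} (ha : 0 ≤ a) : P {ω | a ≤ W ω} ≤ ENNReal.ofReal (Real.exp (-a)) := by
  rcases eq_or_lt_of_le ha with rfl | ha'
  · simpa using prob_le_one
  · have key : ∀ n : ℕ, P {ω | a ≤ W ω} ≤ ENNReal.ofReal (Real.exp (-(a - a / (n + 1)))) := by
      intro n
      have hpos : 0 < a / (n + 1) := by positivity
      have hle : a / (n + 1) ≤ a := by
        rw [div_le_iff₀ (by positivity)]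
        nlinarith [ha', Nat.cast_nonneg (α := ℝ) n]
      have h1 : (0:ℝ) ≤ a - a / (n + 1) := by linarith
      calc P {ω | a ≤ W ω} ≤ P {ω | a - a / (n + 1) < W ω} :=
            measure_mono (fun ω h => by simp only [Set.mem_setOf_eq] at h ⊢; linarith)
        _ = _ := hexp _ h1
    have h0 : Tendsto (fun n : ℕ => a - a / (n + 1)) atTop (nhds a) := by
      have h1 : Tendsto (fun n : ℕ => a * (1 / (n + 1))) atTop (nhds (a * 0)) :=
        tendsto_one_div_add_atTop_nhds_zero_nat.const_mul a
      have h2 : Tendsto (fun n : ℕ => a - a * (1 / (n + 1))) atTop (nhds (a - a * 0)) :=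
        tendsto_const_nhds.sub h1
      simpa [mul_one_div, div_eq_mul_inv] using h2
    have hT : Tendsto (fun n : ℕ => ENNReal.ofReal (Real.exp (-(a - a / (n + 1))))) atTop
        (nhds (ENNReal.ofReal (Real.exp (-a)))) :=
      (ENNReal.continuous_ofReal.tendsto _).comp
        ((Real.continuous_exp.tendsto _).comp h0.neg)
    exact ge_of_tendsto hT (Filter.Eventually.of_forall key)

lemma sort_chain {n : ℕ} (T : Fin (n + 1) → ℝ) {ε : ℝ}
    (hT0 : ∀ i, 0 ≤ T i) (hsep : ∀ i j, i ≠ j → ε ≤ |T i - T j|) :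
    ∀ m : Fin (n + 1), (m : ℕ) * ε ≤ T (Tuple.sort T m) := by
  have hmono := Tuple.monotone_sort T
  intro m
  induction m using Fin.induction with
  | zero => simpa using hT0 _
  | succ i ih =>
    have hne : Tuple.sort T i.castSucc ≠ Tuple.sort T i.succ :=
      fun h => absurd (Equiv.injective _ h) (Fin.castSucc_lt_succ : i.castSucc < i.succ).ne
    have hle : T (Tuple.sort T i.castSucc) ≤ T (Tuple.sort T i.succ) :=
      hmono (Fin.castSucc_lt_succ : i.castSucc < i.succ).le
    have hab := hsep _ _ hne
    rw [abs_sub_comm, abs_of_nonneg (by linarith)] at hab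
    have hc : ((i.castSucc : ℕ) : ℝ) = (i : ℕ) := by simp
    have hs : ((i.succ : ℕ) : ℝ) = (i : ℕ) + 1 := by simp
    rw [hc] at ih
    rw [hs]
    nlinarith

/-- The product box of thresholds used for one permutation. -/
noncomputable def permBox {K : ℕ} (α : Fin (K + 1) → ℝ → ℝ) (ε : ℝ)
    (σ : Equiv.Perm (Fin K)) : Fin (K + 1) → Set ℝ :=
  Fin.cases (Set.Ici (cumHaz (α 0) ((K - 1 : ℕ) * ε)))
    (fun j => if (σ.symm j : ℕ) = 0 then Set.univ
      else Set.Ici (cumHaz (α j.succ) ((σ.symm j : ℕ) * ε)))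

lemma permBox_zero {K : ℕ} (α : Fin (K + 1) → ℝ → ℝ) (ε : ℝ) (σ : Equiv.Perm (Fin K)) :
    permBox α ε σ 0 = Set.Ici (cumHaz (α 0) ((K - 1 : ℕ) * ε)) := by
  simp [permBox]

lemma permBox_succ {K : ℕ} (α : Fin (K + 1) → ℝ → ℝ) (ε : ℝ) (σ : Equiv.Perm (Fin K))
    (j : Fin K) :
    permBox α ε σ j.succ = if (σ.symm j : ℕ) = 0 then Set.univ
      else Set.Ici (cumHaz (α j.succ) ((σ.symm j : ℕ) * ε)) := by
  simp [permBox]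

lemma measurableSet_permBox {K : ℕ} (α : Fin (K + 1) → ℝ → ℝ) (ε : ℝ)
    (σ : Equiv.Perm (Fin K)) (i : Fin (K + 1)) : MeasurableSet (permBox α ε σ i) := by
  refine Fin.cases ?_ ?_ i
  · rw [permBox_zero]; exact measurableSet_Ici
  · intro j
    rw [permBox_succ]
    split_ifs
    · exact MeasurableSet.univ
    · exact measurableSet_Ici


/-- (Permutation lower bound on the market failure probability.) For `ε > 0`,
`P(|τ_i − τ_j| < ε for some i ≠ j) ≥ 1 − e^{−A_0((K−1)ε)} ∑_{σ ∈ S_K}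
  exp (−∑_{i=1}^{K−1} A_{σ(i+1)}(iε))`.
(A Lean index `m : Fin (K-1)` corresponds to the paper's `i = m + 1`, so the paper's
`σ(i+1)` is `σ m.succ` and the argument `iε` is `(m+1)ε`.) -/
theorem market_failure_probability_permutation_lower_bound
    {Ω : Type*} [MeasurableSpace Ω] (P : Measure Ω) [IsProbabilityMeasure P]
    (K : ℕ) (hK : 0 < K) (Z : Fin (K + 1) → Ω → ℝ) (α : Fin (K + 1) → ℝ → ℝ)
    (hZmeas : ∀ i, Measurable (Z i))
    (hZindep : iIndepFun Z P)
    (hZexp : ∀ i, ∀ t : ℝ, 0 ≤ t → P {ω | t < Z i ω} = ENNReal.ofReal (Real.exp (-t)))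
    (hαpos : ∀ i t, 0 ≤ t → 0 < α i t)
    (hαcont : ∀ i, ContinuousOn (α i) (Set.Ici 0))
    (hAinf : ∀ i, Filter.Tendsto (cumHaz (α i)) Filter.atTop Filter.atTop)
    (ε : ℝ) (hε : 0 < ε) :
    P {ω | ∃ i j : Fin K, i ≠ j ∧
        |min (hitTime (α 0) (Z 0 ω)) (hitTime (α i.succ) (Z i.succ ω))
          - min (hitTime (α 0) (Z 0 ω)) (hitTime (α j.succ) (Z j.succ ω))| < ε}
      ≥ 1 - ENNReal.ofReal (Real.exp (-cumHaz (α 0) ((K - 1 : ℕ) * ε)) *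
          ∑ σ : Equiv.Perm (Fin K),
            Real.exp (-(∑ m : Fin (K - 1),
              cumHaz (α (σ (Fin.cast (Nat.succ_pred_eq_of_pos hK) m.succ)).succ) (((m : ℕ) + 1) * ε)))) := by
  classical
  obtain ⟨n, rfl⟩ : ∃ n, K = n + 1 := ⟨K - 1, (Nat.succ_pred_eq_of_pos hK).symm⟩
  rcases n with _ | n
  · -- K = 1 : the bound is trivial
    refine le_trans (le_of_eq (tsub_eq_zero_of_le (le_of_eq ?_))) (by simp)
    simp [cumHaz, Finset.sum_const, Fintype.card_perm, Finset.card_univ]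
  · -- K = n + 2
    set S : Set Ω := {ω | ∃ i j : Fin (n + 1 + 1), i ≠ j ∧
        |min (hitTime (α 0) (Z 0 ω)) (hitTime (α i.succ) (Z i.succ ω))
          - min (hitTime (α 0) (Z 0 ω)) (hitTime (α j.succ) (Z j.succ ω))| < ε} with hS
    -- the boxes
    have hPF : ∀ σ : Equiv.Perm (Fin (n + 1 + 1)),
        P (⋂ i, Z i ⁻¹' permBox α ε σ i) = ∏ i, P (Z i ⁻¹' permBox α ε σ i) := fun σ =>
      hZindep.meas_iInter (fun i => ⟨permBox α ε σ i, measurableSet_permBox α ε σ i, rfl⟩)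
    -- inclusion of the complement
    have hsub : Sᶜ ⊆ ⋃ σ ∈ (Finset.univ : Finset (Equiv.Perm (Fin (n + 1 + 1)))),
        ⋂ i, Z i ⁻¹' permBox α ε σ i := by
      intro ω hω
      simp only [hS, Set.mem_compl_iff, Set.mem_setOf_eq, not_exists, not_and, not_lt] at hω
      set T : Fin (n + 1 + 1) → ℝ := fun i =>
        min (hitTime (α 0) (Z 0 ω)) (hitTime (α i.succ) (Z i.succ ω)) with hT
      have hT0 : ∀ i, 0 ≤ T i := fun i => le_min (hitTime_nonneg _ _) (hitTime_nonneg _ _)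
      set σ := Tuple.sort T with hσ
      have chain := sort_chain T hT0 (fun i j hij => hω i j hij)
      refine Set.mem_biUnion (Finset.mem_univ σ) (Set.mem_iInter.mpr ?_)
      intro i
      refine Fin.cases ?_ ?_ i
      · rw [Set.mem_preimage, permBox_zero]
        have h1 := chain (Fin.last (n + 1))
        have h2 : ((n + 1 + 1 - 1 : ℕ) : ℝ) * ε ≤ hitTime (α 0) (Z 0 ω) := by
          refine le_trans (le_of_eq ?_) (le_trans h1 (min_le_left _ _))
          norm_num
        have hpos : (0:ℝ) < ((n + 1 + 1 - 1 : ℕ) : ℝ) * ε := by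
          have : ((n + 1 + 1 - 1 : ℕ) : ℝ) = (n : ℝ) + 1 := by norm_num
          rw [this]; positivity
        exact cumHaz_le_of_le_hitTime (hαcont 0) hpos h2
      · intro j
        rw [Set.mem_preimage, permBox_succ]
        by_cases h0 : (σ.symm j : ℕ) = 0
        · rw [if_pos h0]; trivial
        · rw [if_neg h0]
          have h1 := chain (σ.symm j)
          rw [Equiv.apply_symm_apply] at h1
          have h2 : ((σ.symm j : ℕ) : ℝ) * ε ≤ hitTime (α j.succ) (Z j.succ ω) :=
            le_trans h1 (min_le_right _ _)
          have hpos : (0:ℝ) < ((σ.symm j : ℕ) : ℝ) * ε := by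
            have h3 : 0 < (σ.symm j : ℕ) := Nat.pos_of_ne_zero h0
            have h4 : (0:ℝ) < ((σ.symm j : ℕ) : ℝ) := by exact_mod_cast h3
            positivity
          exact cumHaz_le_of_le_hitTime (hαcont _) hpos h2
    -- probability bound for each box
    have hbound : ∀ σ : Equiv.Perm (Fin (n + 1 + 1)),
        P (⋂ i, Z i ⁻¹' permBox α ε σ i) ≤
          ENNReal.ofReal (Real.exp (-cumHaz (α 0) ((n + 1 + 1 - 1 : ℕ) * ε)) *
            Real.exp (-(∑ m : Fin (n + 1),
              cumHaz (α (σ m.succ).succ) (((m : ℕ) + 1) * ε)))) := by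
      intro σ
      rw [hPF σ, Fin.prod_univ_succ]
      have hnn : (0:ℝ) ≤ ((n + 1 + 1 - 1 : ℕ) : ℝ) * ε := by positivity
      have hz : P (Z 0 ⁻¹' permBox α ε σ 0) ≤
          ENNReal.ofReal (Real.exp (-cumHaz (α 0) ((n + 1 + 1 - 1 : ℕ) * ε))) := by
        rw [permBox_zero]
        exact tail_bound P (Z 0) (hZexp 0) (cumHaz_nonneg_s14 (hαpos 0) hnn)
      have hrest : (∏ j : Fin (n + 1 + 1), P (Z j.succ ⁻¹' permBox α ε σ j.succ)) ≤
          ENNReal.ofReal (Real.exp (-(∑ m : Fin (n + 1),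
            cumHaz (α (σ m.succ).succ) (((m : ℕ) + 1) * ε)))) := by
        rw [← Equiv.prod_comp σ (fun j => P (Z j.succ ⁻¹' permBox α ε σ j.succ)),
          Fin.prod_univ_succ]
        have h00 : P (Z (σ 0).succ ⁻¹' permBox α ε σ (σ 0).succ) = 1 := by
          rw [permBox_succ, Equiv.symm_apply_apply]
          simp
        rw [h00, one_mul]
        calc (∏ m : Fin (n + 1), P (Z (σ m.succ).succ ⁻¹' permBox α ε σ (σ m.succ).succ))
            ≤ ∏ m : Fin (n + 1), ENNReal.ofReal
                (Real.exp (-cumHaz (α (σ m.succ).succ) (((m : ℕ) + 1) * ε))) := by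
              refine Finset.prod_le_prod' ?_
              intro m _
              have hB : permBox α ε σ (σ m.succ).succ =
                  Set.Ici (cumHaz (α (σ m.succ).succ) (((m : ℕ) + 1) * ε)) := by
                rw [permBox_succ, Equiv.symm_apply_apply, if_neg (by simp)]
                norm_num
              rw [hB]
              exact tail_bound P _ (hZexp _) (cumHaz_nonneg_s14 (hαpos _) (by positivity))
          _ = ENNReal.ofReal (∏ m : Fin (n + 1),
                Real.exp (-cumHaz (α (σ m.succ).succ) (((m : ℕ) + 1) * ε))) :=
              (ENNReal.ofReal_prod_of_nonneg (fun m _ => (Real.exp_pos _).le)).symm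
          _ = _ := by
              congr 1
              rw [← Real.exp_sum]
              congr 1
              rw [← Finset.sum_neg_distrib]
      calc P (Z 0 ⁻¹' permBox α ε σ 0) * ∏ j : Fin (n + 1 + 1), P (Z j.succ ⁻¹' permBox α ε σ j.succ)
          ≤ ENNReal.ofReal (Real.exp (-cumHaz (α 0) ((n + 1 + 1 - 1 : ℕ) * ε))) *
            ENNReal.ofReal (Real.exp (-(∑ m : Fin (n + 1),
              cumHaz (α (σ m.succ).succ) (((m : ℕ) + 1) * ε)))) := mul_le_mul' hz hrest
        _ = _ := (ENNReal.ofReal_mul (Real.exp_pos _).le).symm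
    -- union bound
    have key : P Sᶜ ≤ ENNReal.ofReal (Real.exp (-cumHaz (α 0) ((n + 1 + 1 - 1 : ℕ) * ε)) *
        ∑ σ : Equiv.Perm (Fin (n + 1 + 1)), Real.exp (-(∑ m : Fin (n + 1),
          cumHaz (α (σ m.succ).succ) (((m : ℕ) + 1) * ε)))) := by
      calc P Sᶜ ≤ P (⋃ σ ∈ (Finset.univ : Finset (Equiv.Perm (Fin (n + 1 + 1)))),
            ⋂ i, Z i ⁻¹' permBox α ε σ i) := measure_mono hsub
        _ ≤ ∑ σ : Equiv.Perm (Fin (n + 1 + 1)), P (⋂ i, Z i ⁻¹' permBox α ε σ i) :=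
            measure_biUnion_finset_le _ _
        _ ≤ ∑ σ : Equiv.Perm (Fin (n + 1 + 1)),
            ENNReal.ofReal (Real.exp (-cumHaz (α 0) ((n + 1 + 1 - 1 : ℕ) * ε)) *
              Real.exp (-(∑ m : Fin (n + 1),
                cumHaz (α (σ m.succ).succ) (((m : ℕ) + 1) * ε)))) :=
            Finset.sum_le_sum (fun σ _ => hbound σ)
        _ = ENNReal.ofReal (∑ σ : Equiv.Perm (Fin (n + 1 + 1)),
              Real.exp (-cumHaz (α 0) ((n + 1 + 1 - 1 : ℕ) * ε)) *
              Real.exp (-(∑ m : Fin (n + 1),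
                cumHaz (α (σ m.succ).succ) (((m : ℕ) + 1) * ε)))) :=
            (ENNReal.ofReal_sum_of_nonneg (fun σ _ => by positivity)).symm
        _ = _ := by rw [← Finset.mul_sum]
    rw [ge_iff_le, tsub_le_iff_right]
    have h1 : (1 : ENNReal) ≤ P S + P Sᶜ := by
      rw [← measure_univ (μ := P), ← Set.union_compl_self S]
      exact measure_union_le _ _
    refine h1.trans (add_le_add (le_refl _) ?_)
    exact key
end

section
/- (Pairwise lower bound on the market failure probability.) For every ε > 0, P(|τ_i − τ_j| < ε for some pair (i,j) with 1 ≤ i, j ≤ K, i ≠ j) ≥ 1 − min_{i ≠ j} [ ∫_0^∞ α_i(x) exp(−A_i(x) − A_j(x+ε) − A_0(x+ε)) dx + ∫_0^∞ α_j(x) exp(−A_j(x) − A_i(x+ε) − A_0(x+ε)) dx ], where the minimum is over all pairs of distinct indices i, j ∈ {1, …, K}. -/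
open MeasureTheory ProbabilityTheory Set Filter Topology
open scoped ENNReal

namespace MFP

variable {α : ℝ → ℝ}

noncomputable def Abar (α : ℝ → ℝ) (t : ℝ) : ℝ := cumHaz α (max t 0)

variable {α : ℝ → ℝ}

lemma intInt (hcont : ContinuousOn α (Ici 0)) {a b : ℝ} (ha : 0 ≤ a) (hb : 0 ≤ b) :
    IntervalIntegrable α volume a b := by
  apply (hcont.mono ?_).intervalIntegrable
  intro x hx
  rw [Set.mem_uIcc] at hx
  rcases hx with h | h
  · exact le_trans ha h.1
  · exact le_trans hb h.1

lemma cumHaz_zero : cumHaz α 0 = 0 := intervalIntegral.integral_same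

lemma cumHaz_strictMonoOn (hpos : ∀ t, 0 ≤ t → 0 < α t) (hcont : ContinuousOn α (Ici 0)) :
    StrictMonoOn (cumHaz α) (Ici 0) := by
  intro a ha b hb hab
  have h1 : IntervalIntegrable α volume 0 a := intInt hcont le_rfl ha
  have h2 : IntervalIntegrable α volume a b := intInt hcont ha hb
  have hadd : cumHaz α a + ∫ s in a..b, α s = cumHaz α b :=
    intervalIntegral.integral_add_adjacent_intervals h1 h2
  have hpos' : 0 < ∫ s in a..b, α s :=
    intervalIntegral.intervalIntegral_pos_of_pos_on h2
      (fun x hx => hpos x (le_trans ha hx.1.le)) hab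
  linarith

lemma cumHaz_monotoneOn (hpos : ∀ t, 0 ≤ t → 0 < α t) (hcont : ContinuousOn α (Ici 0)) :
    MonotoneOn (cumHaz α) (Ici 0) :=
  (cumHaz_strictMonoOn hpos hcont).monotoneOn

lemma cumHaz_nonneg (hpos : ∀ t, 0 ≤ t → 0 < α t) (hcont : ContinuousOn α (Ici 0))
    {t : ℝ} (ht : 0 ≤ t) : 0 ≤ cumHaz α t := by
  have := cumHaz_monotoneOn hpos hcont (self_mem_Ici) ht ht
  rwa [cumHaz_zero] at this

lemma cumHaz_continuousOn (hcont : ContinuousOn α (Ici 0)) :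
    ContinuousOn (cumHaz α) (Ici 0) := by
  intro t ht
  have ht' : (0:ℝ) ≤ t := ht
  have hT : (0:ℝ) ≤ t + 1 := by linarith
  have hint : IntegrableOn α (uIcc 0 (t + 1)) volume := by
    rw [uIcc_of_le hT]
    exact (hcont.mono Icc_subset_Ici_self).integrableOn_compact isCompact_Icc
  have hco := intervalIntegral.continuousOn_primitive_interval hint
  rw [uIcc_of_le hT] at hco
  have h1 : ContinuousWithinAt (cumHaz α) (Icc 0 (t + 1)) t := hco t ⟨ht', by linarith⟩
  apply h1.mono_of_mem_nhdsWithin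
  have : Ici (0:ℝ) ∩ Iio (t + 1) ∈ 𝓝[Ici 0] t :=
    inter_mem_nhdsWithin _ (Iio_mem_nhds (lt_add_one t))
  exact mem_of_superset this (fun x hx => ⟨hx.1, hx.2.le⟩)

lemma continuous_Abar (hcont : ContinuousOn α (Ici 0)) : Continuous (Abar α) :=
  (cumHaz_continuousOn hcont).comp_continuous (continuous_id.max continuous_const)
    (fun x => Set.mem_Ici.mpr (le_max_right _ _))

lemma Abar_eq {t : ℝ} (ht : 0 ≤ t) : Abar α t = cumHaz α t := by
  rw [Abar, max_eq_left ht]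

lemma Abar_nonneg (hpos : ∀ t, 0 ≤ t → 0 < α t) (hcont : ContinuousOn α (Ici 0)) (t : ℝ) :
    0 ≤ Abar α t := cumHaz_nonneg hpos hcont (le_max_right _ _)

lemma hitSet_bddBelow (z : ℝ) : BddBelow {s : ℝ | 0 ≤ s ∧ z ≤ cumHaz α s} :=
  ⟨0, fun s hs => hs.1⟩

lemma hitSet_nonempty (hAinf : Tendsto (cumHaz α) atTop atTop) (z : ℝ) :
    {s : ℝ | 0 ≤ s ∧ z ≤ cumHaz α s}.Nonempty := by
  obtain ⟨a, ha⟩ := (hAinf.eventually_ge_atTop z).exists_forall_of_atTop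
  exact ⟨max a 0, le_max_right _ _, ha _ (le_max_left _ _)⟩

lemma hitTime_nonneg (hAinf : Tendsto (cumHaz α) atTop atTop) (z : ℝ) :
    0 ≤ hitTime α z :=
  le_csInf (hitSet_nonempty hAinf z) (fun s hs => hs.1)


lemma hitTime_mono (hAinf : Tendsto (cumHaz α) atTop atTop) : Monotone (hitTime α) := fun z z' h =>
  csInf_le_csInf (hitSet_bddBelow z) (hitSet_nonempty hAinf z') (fun s hs => ⟨hs.1, le_trans h hs.2⟩)

/-- L3: if `0 < t ≤ hitTime α z` then `cumHaz α t ≤ z`. -/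
lemma cumHaz_le_of_le_hitTime (hpos : ∀ t, 0 ≤ t → 0 < α t) (hcont : ContinuousOn α (Ici 0))
    {z t : ℝ} (ht : 0 < t) (h : t ≤ hitTime α z) : cumHaz α t ≤ z := by
  by_contra hlt
  push_neg at hlt
  have hA : Abar α t = cumHaz α t := Abar_eq ht.le
  have hev : ∀ᶠ s in 𝓝 t, z < Abar α s := by
    have : ContinuousAt (Abar α) t := (continuous_Abar hcont).continuousAt
    exact this.eventually_const_lt (by rwa [hA])
  have hev2 : ∀ᶠ s in 𝓝 t, 0 < s := eventually_gt_nhds ht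
  have hmem' : Iio t ∈ 𝓝[<] t := self_mem_nhdsWithin
  obtain ⟨s, hs1, hs2⟩ := (((hev.and hev2).filter_mono nhdsWithin_le_nhds).and hmem').exists
  have hmem : s ∈ {s : ℝ | 0 ≤ s ∧ z ≤ cumHaz α s} := by
    refine ⟨hs1.2.le, ?_⟩
    rw [← Abar_eq hs1.2.le]; exact hs1.1.le
  have : hitTime α z ≤ s := csInf_le (hitSet_bddBelow z) hmem
  have : t ≤ s := le_trans h this
  exact absurd hs2 (not_lt.mpr this)

/-- L1 forward: if `hitTime α z ≤ t` with `0 ≤ t` then `z ≤ cumHaz α t`. -/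
lemma le_cumHaz_of_hitTime_le (hpos : ∀ t, 0 ≤ t → 0 < α t) (hcont : ContinuousOn α (Ici 0))
    (hAinf : Tendsto (cumHaz α) atTop atTop)
    {z t : ℝ} (ht : 0 ≤ t) (h : hitTime α z ≤ t) : z ≤ cumHaz α t := by
  by_contra hlt
  push_neg at hlt
  have hev : ∀ᶠ s in 𝓝 t, Abar α s < z :=
    (continuous_Abar hcont).continuousAt.eventually_lt_const (by rwa [Abar_eq ht])
  have hmem' : Ioi t ∈ 𝓝[>] t := self_mem_nhdsWithin
  obtain ⟨s, hs1, hs2⟩ := ((hev.filter_mono nhdsWithin_le_nhds).and hmem').exists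
  have hs0 : (0:ℝ) ≤ s := le_trans ht (le_of_lt hs2)
  have hlow : ∀ u ∈ {s : ℝ | 0 ≤ s ∧ z ≤ cumHaz α s}, s ≤ u := by
    intro u hu
    by_contra hus
    push_neg at hus
    have : cumHaz α u ≤ cumHaz α s := cumHaz_monotoneOn hpos hcont hu.1 hs0 hus.le
    rw [← Abar_eq hs0] at this
    exact absurd (le_trans hu.2 this) (not_le.mpr hs1)
  have : s ≤ hitTime α z := le_csInf (hitSet_nonempty hAinf z) hlow
  have := le_trans this h
  exact absurd hs2 (not_lt.mpr this)

/-- L4 -/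
lemma hitTime_cumHaz (hpos : ∀ t, 0 ≤ t → 0 < α t) (hcont : ContinuousOn α (Ici 0))
    {x : ℝ} (hx : 0 ≤ x) : hitTime α (cumHaz α x) = x := by
  refine le_antisymm (csInf_le (hitSet_bddBelow _) ⟨hx, le_rfl⟩) ?_
  refine le_csInf ⟨x, hx, le_rfl⟩ (fun s hs => ?_)
  by_contra hsx
  push_neg at hsx
  exact absurd hs.2 (not_le.mpr (cumHaz_strictMonoOn hpos hcont hs.1 hx hsx))

lemma cumHaz_image (hpos : ∀ t, 0 ≤ t → 0 < α t) (hcont : ContinuousOn α (Ici 0))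
    (hAinf : Tendsto (cumHaz α) atTop atTop) : cumHaz α '' Ioi 0 = Ioi 0 := by
  apply Subset.antisymm
  · rintro u ⟨x, hx, rfl⟩
    have := cumHaz_strictMonoOn hpos hcont self_mem_Ici (Set.mem_Ici.mpr (le_of_lt hx)) hx
    rw [cumHaz_zero] at this
    simpa using this
  · intro u hu
    obtain ⟨b, hb⟩ := (hAinf.eventually_ge_atTop u).exists_forall_of_atTop
    set c := max b 0 with hc
    have hcu : u ≤ cumHaz α c := hb _ (le_max_left _ _)
    have h0c : (0:ℝ) ≤ c := le_max_right _ _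
    have := intermediate_value_Icc h0c ((cumHaz_continuousOn hcont).mono Icc_subset_Ici_self)
    have hmem : u ∈ Icc (cumHaz α 0) (cumHaz α c) := ⟨by rw [cumHaz_zero]; exact hu.le, hcu⟩
    obtain ⟨x, hx, hxu⟩ := this hmem
    refine ⟨x, ?_, hxu⟩
    rcases eq_or_lt_of_le hx.1 with h | h
    · exfalso; rw [← h, cumHaz_zero] at hxu; exact absurd hxu.symm (ne_of_gt hu)
    · exact h

lemma cumHaz_hasDerivAt (hcont : ContinuousOn α (Ici 0)) {x : ℝ} (hx : 0 < x) :
    HasDerivAt (cumHaz α) (α x) x := by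
  have hca : ContinuousAt α x := hcont.continuousAt (Ici_mem_nhds hx)
  have hsm := ContinuousOn.stronglyMeasurableAtFilter (μ := volume) isOpen_Ioi
    (hcont.mono Ioi_subset_Ici_self)
  exact intervalIntegral.integral_hasDerivAt_right (intInt hcont le_rfl hx.le) (hsm x hx) hca


/-- density of the standard exponential law -/
noncomputable def expd : ℝ → ℝ≥0∞ :=
  fun u => ENNReal.ofReal ((Ioi (0:ℝ)).indicator (fun u => Real.exp (-u)) u)

lemma measurable_expd : Measurable expd :=
  ((Real.continuous_exp.comp continuous_neg).measurable.indicator measurableSet_Ioi).ennreal_ofReal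

/-- the standard exponential law -/
noncomputable def expM : Measure ℝ := volume.withDensity expd

lemma integrableOn_exp_neg : IntegrableOn (fun u => Real.exp (-u)) (Ioi (0:ℝ)) := by
  have := exp_neg_integrableOn_Ioi (0:ℝ) (b := 1) one_pos
  simpa using this

lemma integrableOn_exp_neg' (a : ℝ) : IntegrableOn (fun u => Real.exp (-u)) (Ioi a) := by
  have := exp_neg_integrableOn_Ioi a (b := 1) one_pos
  simpa using this

lemma expM_Ioi (a : ℝ) : expM (Ioi a) = ENNReal.ofReal (Real.exp (-(max a 0))) := by
  rw [expM, withDensity_apply _ measurableSet_Ioi]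
  have h1 : ∫⁻ u in Ioi a, expd u = ∫⁻ u in Ioi (max a 0), ENNReal.ofReal (Real.exp (-u)) := by
    have : ∀ u, expd u = (Ioi (0:ℝ)).indicator (fun u => ENNReal.ofReal (Real.exp (-u))) u := by
      intro u
      by_cases hu : u ∈ Ioi (0:ℝ) <;> simp [expd, hu]
    simp_rw [this]
    rw [lintegral_indicator measurableSet_Ioi, Measure.restrict_restrict measurableSet_Ioi,
      Ioi_inter_Ioi]
    rw [sup_comm]
  rw [h1, ← ofReal_integral_eq_lintegral_ofReal (integrableOn_exp_neg' _)
    (Eventually.of_forall (fun u => (Real.exp_pos _).le)), integral_exp_neg_Ioi]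

instance : IsProbabilityMeasure expM := by
  constructor
  have h0 : expM (Iic 0) = 0 := by
    rw [expM, withDensity_apply _ measurableSet_Iic]
    rw [show (fun u => expd u) = expd from rfl]
    have : ∀ᵐ u ∂(volume.restrict (Iic (0:ℝ))), expd u = 0 := by
      refine (ae_restrict_iff' measurableSet_Iic).mpr (Eventually.of_forall fun u hu => ?_)
      simp [expd, indicator_of_notMem (by simpa using hu : u ∉ Ioi (0:ℝ))]
    rw [lintegral_congr_ae this, lintegral_zero]
  have : (univ : Set ℝ) = Iic 0 ∪ Ioi 0 := by simp [Iic_union_Ioi]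
  rw [this, measure_union (Iic_disjoint_Ioi le_rfl) measurableSet_Ioi, h0, expM_Ioi]
  simp

/-- any random variable with the standard exponential tail has law `expM` -/
lemma law_eq_expM {Ω : Type*} [MeasurableSpace Ω] (P : Measure Ω) [IsProbabilityMeasure P]
    (W : Ω → ℝ) (hW : Measurable W)
    (htail : ∀ t : ℝ, 0 ≤ t → P {ω | t < W ω} = ENNReal.ofReal (Real.exp (-t))) :
    P.map W = expM := by
  haveI : IsProbabilityMeasure (P.map W) := Measure.isProbabilityMeasure_map hW.aemeasurable
  have htail' : ∀ a : ℝ, (P.map W) (Ioi a) = expM (Ioi a) := by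
    intro a
    rw [Measure.map_apply hW measurableSet_Ioi, expM_Ioi]
    have hpre : W ⁻¹' Ioi a = {ω | a < W ω} := rfl
    rcases le_or_gt 0 a with ha | ha
    · rw [hpre, htail a ha, max_eq_left ha]
    · rw [max_eq_right ha.le]
      have h1 : P {ω | (0:ℝ) < W ω} = 1 := by rw [htail 0 le_rfl]; simp
      have h2 : P (W ⁻¹' Ioi a) = 1 := le_antisymm prob_le_one
        (h1 ▸ measure_mono (fun ω (hω : (0:ℝ) < W ω) => lt_trans ha hω))
      rw [h2]; simp
  refine Measure.ext_of_Iic (P.map W) expM (fun a => ?_)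
  have hc : Iic a = (Ioi a)ᶜ := by simp
  rw [hc, measure_compl measurableSet_Ioi (measure_ne_top _ _),
    measure_compl measurableSet_Ioi (measure_ne_top _ _), htail' a]
  simp


lemma expM_Ici {t : ℝ} (ht : 0 ≤ t) : expM (Ici t) = ENNReal.ofReal (Real.exp (-t)) := by
  have hsing : expM {t} = 0 :=
    withDensity_absolutelyContinuous volume expd (measure_singleton t)
  have h1 : expM (Ici t) ≤ expM (Ioi t) := by
    have hsub : Ici t ⊆ {t} ∪ Ioi t := by
      intro x hx
      rcases eq_or_lt_of_le (mem_Ici.mp hx) with h | h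
      · exact Or.inl (by simp [← h])
      · exact Or.inr h
    calc expM (Ici t) ≤ expM ({t} ∪ Ioi t) := measure_mono hsub
      _ ≤ expM {t} + expM (Ioi t) := measure_union_le _ _
      _ = expM (Ioi t) := by rw [hsing, zero_add]
  have h2 := measure_mono (Ioi_subset_Ici_self (a := t)) (μ := expM)
  rw [le_antisymm h1 h2, expM_Ioi, max_eq_left ht]

lemma key {Ω : Type*} [MeasurableSpace Ω] (P : Measure Ω) [IsProbabilityMeasure P]
    (Za Zb Zc : Ω → ℝ) (hma : Measurable Za) (hmb : Measurable Zb) (hmc : Measurable Zc)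
    (hlawa : P.map Za = expM) (hlawc : P.map Zc = expM)
    (hiACb : IndepFun (fun ω => (Za ω, Zc ω)) Zb P) (hiac : IndepFun Za Zc P)
    (A B C : ℝ → ℝ)
    (hApos : ∀ t, 0 ≤ t → 0 < A t) (hAcont : ContinuousOn A (Ici 0))
    (hAinf : Tendsto (cumHaz A) atTop atTop)
    (hBpos : ∀ t, 0 ≤ t → 0 < B t) (hBcont : ContinuousOn B (Ici 0))
    (hCpos : ∀ t, 0 ≤ t → 0 < C t) (hCcont : ContinuousOn C (Ici 0))
    (hlawb : P.map Zb = expM)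
    (ε : ℝ) (hε : 0 < ε) :
    P {ω | Abar B (hitTime A (Za ω) + ε) ≤ Zb ω ∧ Abar C (hitTime A (Za ω) + ε) ≤ Zc ω}
      ≤ ENNReal.ofReal (∫ x in Ioi (0:ℝ),
          A x * Real.exp (-cumHaz A x - cumHaz B (x + ε) - cumHaz C (x + ε))) := by
  set Gb : ℝ → ℝ := fun z => Abar B (hitTime A z + ε) with hGbdef
  set Gc : ℝ → ℝ := fun z => Abar C (hitTime A z + ε) with hGcdef
  have hGb : Measurable Gb :=
    (continuous_Abar hBcont).measurable.comp ((hitTime_mono hAinf).measurable.add_const ε)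
  have hGc : Measurable Gc :=
    (continuous_Abar hCcont).measurable.comp ((hitTime_mono hAinf).measurable.add_const ε)
  have hGbnn : ∀ z, 0 ≤ Gb z := fun z => Abar_nonneg hBpos hBcont _
  have hGcnn : ∀ z, 0 ≤ Gc z := fun z => Abar_nonneg hCpos hCcont _
  set S : Set ((ℝ × ℝ) × ℝ) := {q | Gb q.1.1 ≤ q.2 ∧ Gc q.1.1 ≤ q.1.2} with hSdef
  have hS : MeasurableSet S :=
    (measurableSet_le (hGb.comp (measurable_fst.comp measurable_fst)) measurable_snd).inter
      (measurableSet_le (hGc.comp (measurable_fst.comp measurable_fst))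
        (measurable_snd.comp measurable_fst))
  have hXm : Measurable (fun ω => (Za ω, Zc ω)) := hma.prodMk hmc
  have hfm : Measurable (fun ω => ((Za ω, Zc ω), Zb ω)) := hXm.prodMk hmb
  -- step 1: rewrite as product measure of S
  have step1 : P {ω | Abar B (hitTime A (Za ω) + ε) ≤ Zb ω
        ∧ Abar C (hitTime A (Za ω) + ε) ≤ Zc ω} = ((expM.prod expM).prod expM) S := by
    have hpre : {ω | Abar B (hitTime A (Za ω) + ε) ≤ Zb ω
        ∧ Abar C (hitTime A (Za ω) + ε) ≤ Zc ω} = (fun ω => ((Za ω, Zc ω), Zb ω)) ⁻¹' S := rfl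
    rw [hpre, ← Measure.map_apply hfm hS,
      (indepFun_iff_map_prod_eq_prod_map_map hXm.aemeasurable hmb.aemeasurable).mp hiACb,
      (indepFun_iff_map_prod_eq_prod_map_map hma.aemeasurable hmc.aemeasurable).mp hiac,
      hlawa, hlawb, hlawc]
  -- step 2: slice
  set T : Set (ℝ × ℝ) := {q | Gc q.1 ≤ q.2} with hTdef
  have hT : MeasurableSet T := measurableSet_le (hGc.comp measurable_fst) measurable_snd
  set g : ℝ × ℝ → ℝ≥0∞ := fun q => ENNReal.ofReal (Real.exp (-Gb q.1)) with hgdef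
  have hgm : Measurable g := (((hGb.comp measurable_fst).neg).exp).ennreal_ofReal
  have step2 : ((expM.prod expM).prod expM) S = ∫⁻ p, T.indicator g p ∂(expM.prod expM) := by
    rw [Measure.prod_apply hS]
    refine lintegral_congr (fun p => ?_)
    by_cases hp : Gc p.1 ≤ p.2
    · have hslice : Prod.mk p ⁻¹' S = Ici (Gb p.1) := by
        ext b; simp [hSdef, hp, mem_Ici]
      rw [hslice, expM_Ici (hGbnn _), indicator_of_mem (by exact hp) g]
    · have hslice : Prod.mk p ⁻¹' S = ∅ := by
        ext b; simp [hSdef, hp]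
      rw [hslice, measure_empty, indicator_of_notMem (by exact hp) g]
  -- step 3: Fubini over the pair
  have step3 : ∫⁻ p, T.indicator g p ∂(expM.prod expM)
      = ∫⁻ a, ENNReal.ofReal (Real.exp (-Gb a) * Real.exp (-Gc a)) ∂expM := by
    rw [lintegral_prod _ (hgm.indicator hT).aemeasurable]
    refine lintegral_congr (fun a => ?_)
    have hfun : ∀ b : ℝ, T.indicator g (a, b)
        = (Ici (Gc a)).indicator (fun _ => ENNReal.ofReal (Real.exp (-Gb a))) b := by
      intro b
      by_cases hb : Gc a ≤ b
      · rw [indicator_of_mem (by exact hb) g, indicator_of_mem (mem_Ici.mpr hb)]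
      · rw [indicator_of_notMem (by exact hb) g, indicator_of_notMem (fun h => hb (mem_Ici.mp h))]
    simp_rw [hfun]
    rw [lintegral_indicator measurableSet_Ici, setLIntegral_const, expM_Ici (hGcnn a),
      ← ENNReal.ofReal_mul (Real.exp_pos _).le]
  -- step 4: unfold expM as density
  set h : ℝ → ℝ := fun a => Real.exp (-a) * (Real.exp (-Gb a) * Real.exp (-Gc a)) with hhdef
  have hhm : Measurable h :=
    ((measurable_id.neg.exp).mul ((hGb.neg.exp).mul (hGc.neg.exp)))
  have step4 : ∫⁻ a, ENNReal.ofReal (Real.exp (-Gb a) * Real.exp (-Gc a)) ∂expM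
      = ∫⁻ a in Ioi (0:ℝ), ENNReal.ofReal (h a) := by
    rw [expM, lintegral_withDensity_eq_lintegral_mul volume measurable_expd
      (show Measurable (fun a => ENNReal.ofReal (Real.exp (-Gb a) * Real.exp (-Gc a))) from
        ((((hGb.neg.exp).mul (hGc.neg.exp))).ennreal_ofReal))]
    have hfun : ∀ a : ℝ, (expd * fun a => ENNReal.ofReal (Real.exp (-Gb a) * Real.exp (-Gc a))) a
        = (Ioi (0:ℝ)).indicator (fun a => ENNReal.ofReal (h a)) a := by
      intro a
      by_cases ha : a ∈ Ioi (0:ℝ)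
      · simp only [Pi.mul_apply, expd, indicator_of_mem ha, hhdef,
          ← ENNReal.ofReal_mul (Real.exp_pos (-a)).le]
      · simp [expd, indicator_of_notMem ha]
    simp_rw [hfun]
    rw [lintegral_indicator measurableSet_Ioi]
  -- step 5: convert to Bochner integral
  have hint : IntegrableOn h (Ioi (0:ℝ)) := by
    refine Integrable.mono' integrableOn_exp_neg hhm.aestronglyMeasurable ?_
    refine Eventually.of_forall (fun a => ?_)
    have h1 : Real.exp (-Gb a) ≤ 1 := Real.exp_le_one_iff.mpr (by linarith [hGbnn a])
    have h2 : Real.exp (-Gc a) ≤ 1 := Real.exp_le_one_iff.mpr (by linarith [hGcnn a])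
    have h3 : (0:ℝ) ≤ h a := by positivity
    rw [Real.norm_eq_abs, abs_of_nonneg h3, hhdef]
    have h4 : Real.exp (-Gb a) * Real.exp (-Gc a) ≤ 1 :=
      mul_le_one₀ h1 (Real.exp_pos _).le h2
    calc Real.exp (-a) * (Real.exp (-Gb a) * Real.exp (-Gc a))
        ≤ Real.exp (-a) * 1 := by
          exact mul_le_mul_of_nonneg_left h4 (Real.exp_pos _).le
      _ = Real.exp (-a) := mul_one _
  have step5 : ∫⁻ a in Ioi (0:ℝ), ENNReal.ofReal (h a)
      = ENNReal.ofReal (∫ a in Ioi (0:ℝ), h a) := by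
    rw [ofReal_integral_eq_lintegral_ofReal hint
      (Eventually.of_forall (fun a => by positivity))]
  -- step 6: change of variables
  have step6 : ∫ a in Ioi (0:ℝ), h a
      = ∫ x in Ioi (0:ℝ), A x * Real.exp (-cumHaz A x - cumHaz B (x + ε) - cumHaz C (x + ε)) := by
    have himg := cumHaz_image hApos hAcont hAinf
    have hderiv : ∀ x ∈ Ioi (0:ℝ), HasDerivWithinAt (cumHaz A) (A x) (Ioi 0) x :=
      fun x hx => (cumHaz_hasDerivAt hAcont hx).hasDerivWithinAt
    have hinj : InjOn (cumHaz A) (Ioi 0) :=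
      ((cumHaz_strictMonoOn hApos hAcont).injOn).mono Ioi_subset_Ici_self
    have hcv := integral_image_eq_integral_abs_deriv_smul measurableSet_Ioi hderiv hinj h
    rw [himg] at hcv
    rw [hcv]
    refine setIntegral_congr_fun measurableSet_Ioi (fun x hx => ?_)
    have hx0 : (0:ℝ) < x := hx
    have hxε : (0:ℝ) ≤ x + ε := by linarith
    have hht : hitTime A (cumHaz A x) = x := hitTime_cumHaz hApos hAcont hx0.le
    have hb' : Gb (cumHaz A x) = cumHaz B (x + ε) := by
      rw [hGbdef]; simp only []; rw [hht, Abar_eq hxε]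
    have hc' : Gc (cumHaz A x) = cumHaz C (x + ε) := by
      rw [hGcdef]; simp only []; rw [hht, Abar_eq hxε]
    rw [smul_eq_mul, abs_of_pos (hApos x hx0.le), hhdef]
    simp only [hb', hc']
    rw [← Real.exp_add, ← Real.exp_add]
    ring_nf
  rw [step1, step2, step3, step4, step5, step6]


lemma adverse {αa αb α0 : ℝ → ℝ}
    (hainf : Tendsto (cumHaz αa) atTop atTop)
    (hbpos : ∀ t, 0 ≤ t → 0 < αb t) (hbcont : ContinuousOn αb (Ici 0))
    (h0pos : ∀ t, 0 ≤ t → 0 < α0 t) (h0cont : ContinuousOn α0 (Ici 0))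
    {za zb z0 ε : ℝ} (hε : 0 < ε)
    (h : min (hitTime α0 z0) (hitTime αa za) + ε ≤ min (hitTime α0 z0) (hitTime αb zb)) :
    Abar αb (hitTime αa za + ε) ≤ zb ∧ Abar α0 (hitTime αa za + ε) ≤ z0 := by
  have hηa : 0 ≤ hitTime αa za := hitTime_nonneg hainf za
  have h0' : min (hitTime α0 z0) (hitTime αa za) + ε ≤ hitTime α0 z0 :=
    le_trans h (min_le_left _ _)
  have hmin : min (hitTime α0 z0) (hitTime αa za) = hitTime αa za := by
    rcases min_choice (hitTime α0 z0) (hitTime αa za) with hm | hm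
    · exfalso; rw [hm] at h0'; linarith
    · exact hm
  rw [hmin] at h h0'
  have hb' : hitTime αa za + ε ≤ hitTime αb zb := le_trans h (min_le_right _ _)
  have ht : 0 < hitTime αa za + ε := by linarith
  exact ⟨by rw [Abar_eq ht.le]; exact cumHaz_le_of_le_hitTime hbpos hbcont ht hb',
    by rw [Abar_eq ht.le]; exact cumHaz_le_of_le_hitTime h0pos h0cont ht h0'⟩


end MFP

open MFP in
/-- (Pairwise lower bound on the market failure probability.) For `ε > 0`,
`P(|τ_i − τ_j| < ε for some i ≠ j) ≥ 1 − min_{i ≠ j} [∫_0^∞ α_i(x) e^{−A_i(x) − A_j(x+ε) − A_0(x+ε)} dx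
  + ∫_0^∞ α_j(x) e^{−A_j(x) − A_i(x+ε) − A_0(x+ε)} dx]`,
the minimum being over all pairs of distinct bank indices. -/
theorem market_failure_probability_pairwise_lower_bound
    {Ω : Type*} [MeasurableSpace Ω] (P : Measure Ω) [IsProbabilityMeasure P]
    (K : ℕ) (hK : 2 ≤ K) (Z : Fin (K + 1) → Ω → ℝ) (α : Fin (K + 1) → ℝ → ℝ)
    (hZmeas : ∀ i, Measurable (Z i))
    (hZindep : iIndepFun Z P)
    (hZexp : ∀ i, ∀ t : ℝ, 0 ≤ t → P {ω | t < Z i ω} = ENNReal.ofReal (Real.exp (-t)))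
    (hαpos : ∀ i t, 0 ≤ t → 0 < α i t)
    (hαcont : ∀ i, ContinuousOn (α i) (Set.Ici 0))
    (hAinf : ∀ i, Filter.Tendsto (cumHaz (α i)) Filter.atTop Filter.atTop)
    (ε : ℝ) (hε : 0 < ε) :
    P {ω | ∃ i j : Fin K, i ≠ j ∧
        |min (hitTime (α 0) (Z 0 ω)) (hitTime (α i.succ) (Z i.succ ω))
          - min (hitTime (α 0) (Z 0 ω)) (hitTime (α j.succ) (Z j.succ ω))| < ε}
      ≥ 1 - ENNReal.ofReal (sInf {r : ℝ | ∃ i j : Fin K, i ≠ j ∧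
          r = (∫ x in Set.Ioi (0 : ℝ), α i.succ x *
                Real.exp (-cumHaz (α i.succ) x - cumHaz (α j.succ) (x + ε)
                  - cumHaz (α 0) (x + ε)))
            + ∫ x in Set.Ioi (0 : ℝ), α j.succ x *
                Real.exp (-cumHaz (α j.succ) x - cumHaz (α i.succ) (x + ε)
                  - cumHaz (α 0) (x + ε))}) := by
  classical
  set T : Fin K → Fin K → ℝ := fun i j =>
      (∫ x in Set.Ioi (0 : ℝ), α i.succ x *
            Real.exp (-cumHaz (α i.succ) x - cumHaz (α j.succ) (x + ε)
              - cumHaz (α 0) (x + ε)))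
        + ∫ x in Set.Ioi (0 : ℝ), α j.succ x *
            Real.exp (-cumHaz (α j.succ) x - cumHaz (α i.succ) (x + ε)
              - cumHaz (α 0) (x + ε)) with hT
  set S : Set ℝ := {r : ℝ | ∃ i j : Fin K, i ≠ j ∧ r = T i j} with hSdef
  set E : Set Ω := {ω | ∃ i j : Fin K, i ≠ j ∧
        |min (hitTime (α 0) (Z 0 ω)) (hitTime (α i.succ) (Z i.succ ω))
          - min (hitTime (α 0) (Z 0 ω)) (hitTime (α j.succ) (Z j.succ ω))| < ε} with hEdef
  -- S is a finite nonempty set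
  have hfin : S.Finite := by
    have hsub : S ⊆ (fun p : Fin K × Fin K => T p.1 p.2) '' Set.univ := by
      rintro r ⟨i, j, hij, rfl⟩
      exact ⟨(i, j), Set.mem_univ _, rfl⟩
    exact (Set.finite_univ.image _).subset hsub
  have hne : S.Nonempty := by
    refine ⟨T ⟨0, by omega⟩ ⟨1, by omega⟩, ⟨0, by omega⟩, ⟨1, by omega⟩, ?_, rfl⟩
    exact Fin.ne_of_val_ne (show (0:ℕ) ≠ 1 by omega)
  obtain ⟨i, j, hij, hmin⟩ := hne.csInf_mem hfin
  -- the two adverse events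
  set B1 : Set Ω := {ω | Abar (α j.succ) (hitTime (α i.succ) (Z i.succ ω) + ε) ≤ Z j.succ ω
      ∧ Abar (α 0) (hitTime (α i.succ) (Z i.succ ω) + ε) ≤ Z 0 ω} with hB1def
  set B2 : Set Ω := {ω | Abar (α i.succ) (hitTime (α j.succ) (Z j.succ ω) + ε) ≤ Z i.succ ω
      ∧ Abar (α 0) (hitTime (α j.succ) (Z j.succ ω) + ε) ≤ Z 0 ω} with hB2def
  have hsub : Eᶜ ⊆ B1 ∪ B2 := by
    intro ω hω
    have hω' : ¬ (i ≠ j ∧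
        |min (hitTime (α 0) (Z 0 ω)) (hitTime (α i.succ) (Z i.succ ω))
          - min (hitTime (α 0) (Z 0 ω)) (hitTime (α j.succ) (Z j.succ ω))| < ε) := by
      intro hcon
      exact hω ⟨i, j, hcon⟩
    have habs : ε ≤ |min (hitTime (α 0) (Z 0 ω)) (hitTime (α i.succ) (Z i.succ ω))
        - min (hitTime (α 0) (Z 0 ω)) (hitTime (α j.succ) (Z j.succ ω))| := by
      by_contra hcon
      push_neg at hcon
      exact hω' ⟨hij, hcon⟩
    rcases le_abs.mp habs with hcase | hcase
    · -- τ_i ≥ τ_j + ε : adverse with a = j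
      right
      refine adverse (hAinf j.succ) (hαpos i.succ) (hαcont i.succ) (hαpos 0) (hαcont 0) hε ?_
      linarith
    · -- τ_j ≥ τ_i + ε : adverse with a = i
      left
      refine adverse (hAinf i.succ) (hαpos j.succ) (hαcont j.succ) (hαpos 0) (hαcont 0) hε ?_
      rw [neg_sub] at hcase
      linarith
  -- bounds on the adverse events
  have hlaw : ∀ k, P.map (Z k) = expM := fun k => law_eq_expM P (Z k) (hZmeas k) (hZexp k)
  have hne1 : i.succ ≠ j.succ := fun h => hij (Fin.succ_injective _ h)
  have hB1 : P B1 ≤ ENNReal.ofReal (∫ x in Set.Ioi (0 : ℝ), α i.succ x *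
      Real.exp (-cumHaz (α i.succ) x - cumHaz (α j.succ) (x + ε) - cumHaz (α 0) (x + ε))) :=
    key P (Z i.succ) (Z j.succ) (Z 0) (hZmeas _) (hZmeas _) (hZmeas _)
      (hlaw _) (hlaw _)
      (hZindep.indepFun_prodMk hZmeas i.succ 0 j.succ hne1 (Fin.succ_ne_zero j).symm)
      (hZindep.indepFun (Fin.succ_ne_zero i))
      (α i.succ) (α j.succ) (α 0)
      (hαpos _) (hαcont _) (hAinf _) (hαpos _) (hαcont _) (hαpos _) (hαcont _)
      (hlaw _) ε hε
  have hB2 : P B2 ≤ ENNReal.ofReal (∫ x in Set.Ioi (0 : ℝ), α j.succ x *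
      Real.exp (-cumHaz (α j.succ) x - cumHaz (α i.succ) (x + ε) - cumHaz (α 0) (x + ε))) :=
    key P (Z j.succ) (Z i.succ) (Z 0) (hZmeas _) (hZmeas _) (hZmeas _)
      (hlaw _) (hlaw _)
      (hZindep.indepFun_prodMk hZmeas j.succ 0 i.succ hne1.symm (Fin.succ_ne_zero i).symm)
      (hZindep.indepFun (Fin.succ_ne_zero j))
      (α j.succ) (α i.succ) (α 0)
      (hαpos _) (hαcont _) (hAinf _) (hαpos _) (hαcont _) (hαpos _) (hαcont _)
      (hlaw _) ε hε
  -- nonnegativity of the integrals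
  have hnn : ∀ (a b : Fin K), 0 ≤ ∫ x in Set.Ioi (0 : ℝ), α a.succ x *
      Real.exp (-cumHaz (α a.succ) x - cumHaz (α b.succ) (x + ε) - cumHaz (α 0) (x + ε)) :=
    fun a b => setIntegral_nonneg measurableSet_Ioi
      (fun x hx => mul_nonneg (hαpos a.succ x (le_of_lt hx)).le (Real.exp_pos _).le)
  -- final assembly
  have hEc : P Eᶜ ≤ ENNReal.ofReal (sInf S) := by
    calc P Eᶜ ≤ P (B1 ∪ B2) := measure_mono hsub
      _ ≤ P B1 + P B2 := measure_union_le _ _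
      _ ≤ _ + _ := add_le_add hB1 hB2
      _ = ENNReal.ofReal (T i j) := by rw [hT, ← ENNReal.ofReal_add (hnn i j) (hnn j i)]
      _ = ENNReal.ofReal (sInf S) := by rw [hmin]
  rw [ge_iff_le, tsub_le_iff_right]
  calc (1 : ℝ≥0∞) = P Set.univ := measure_univ.symm
    _ = P (E ∪ Eᶜ) := by rw [Set.union_compl_self]
    _ ≤ P E + P Eᶜ := measure_union_le _ _
    _ ≤ P E + ENNReal.ofReal (sInf S) := add_le_add_right hEc _
end
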